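/- Cubic trace bound for trace-free symmetric matrices (used in the proofs of Lemma 2.4 and Lemma 2.6): Let n ≥ 2 and let A be a real symmetric n×n matrix with trace zero. Then tr(A³) ≤ ((n−2)/√(n(n−1)))·(tr(A²))^{3/2}, where tr(A²) = Σ_{i,j} A_{ij}² and tr(A³) = Σ_{i,j,k} A_{ij}A_{jk}A_{ki}. -/

import Mathlib

set_option maxHeartbeats 1000000

/-- Okumura's lemma: scalar cubic-sum bound for zero-sum tuples. -/
lemma okumura_lemma (n : ℕ) (hn : 2 ≤ n) (a : Fin n → ℝ) (h0 : ∑ i, a i = 0) :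
    ∑ i, (a i) ^ 3
    ≤ (((n : ℝ) - 2) / Real.sqrt ((n : ℝ) * ((n : ℝ) - 1)))
        * (∑ i, (a i) ^ 2) ^ ((3 : ℝ) / 2) := by
  have hn2 : (2 : ℝ) ≤ (n : ℝ) := by exact_mod_cast hn
  set s : ℝ := ∑ i, (a i) ^ 2 with hs_def
  have hs0 : 0 ≤ s := Finset.sum_nonneg fun i _ => sq_nonneg _
  have hqpos : 0 < Real.sqrt ((n : ℝ) * ((n : ℝ) - 1)) := by
    apply Real.sqrt_pos.2; nlinarith
  set q : ℝ := Real.sqrt ((n : ℝ) * ((n : ℝ) - 1)) with hq_def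
  have hq2 : q ^ 2 = (n : ℝ) * ((n : ℝ) - 1) := Real.sq_sqrt (by nlinarith)
  clear_value s q
  rcases eq_or_lt_of_le hs0 with hs | hs
  · -- all entries are zero
    have hall : ∀ i ∈ Finset.univ, (a i) ^ 2 = 0 := by
      intro i _
      have := (Finset.sum_eq_zero_iff_of_nonneg (fun i _ => sq_nonneg (a i))).1 (hs_def.symm.trans hs.symm)
      exact this i (Finset.mem_univ i)
    have h1 : ∑ i, (a i) ^ 3 = 0 := by
      apply Finset.sum_eq_zero
      intro i _
      have := hall i (Finset.mem_univ i)
      have : a i = 0 := by nlinarith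
      simp [this]
    rw [h1, ← hs, Real.zero_rpow (by norm_num)]
    simp
  · -- main case : s > 0
    set β : ℝ := Real.sqrt s with hβ_def
    have hβpos : 0 < β := Real.sqrt_pos.2 hs
    have hβ2 : β ^ 2 = s := Real.sq_sqrt hs0
    clear_value β
    set p : ℝ := β / q with hp_def
    have hppos : 0 < p := div_pos hβpos hqpos
    clear_value p
    have hp2 : (n : ℝ) * ((n : ℝ) - 1) * p ^ 2 = s := by
      rw [hp_def, div_pow, ← hq2]
      field_simp
      nlinarith [hβ2]
    -- every entry is at most (n-1) p
    have hmax : ∀ i, a i ≤ ((n : ℝ) - 1) * p := by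
      intro i
      have herase : ∑ j ∈ Finset.univ.erase i, a j = - a i := by
        have := Finset.add_sum_erase Finset.univ a (Finset.mem_univ i)
        linarith [h0, this]
      have hcs : (∑ j ∈ Finset.univ.erase i, a j) ^ 2
          ≤ (Finset.univ.erase i).card * ∑ j ∈ Finset.univ.erase i, (a j) ^ 2 :=
        sq_sum_le_card_mul_sum_sq
      have hcard : ((Finset.univ.erase i).card : ℝ) = (n : ℝ) - 1 := by
        rw [Finset.card_erase_of_mem (Finset.mem_univ i)]
        simp only [Finset.card_univ, Fintype.card_fin]
        have : 1 ≤ n := le_trans one_le_two hn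
        push_cast [Nat.cast_sub this]
        ring
      have hserase : ∑ j ∈ Finset.univ.erase i, (a j) ^ 2 = s - (a i) ^ 2 := by
        have h := Finset.add_sum_erase Finset.univ (fun j => (a j) ^ 2) (Finset.mem_univ i)
        linarith [h]
      rw [herase, hcard, hserase] at hcs
      -- hcs : (-a i)^2 ≤ (n-1) * (s - a i ^2)
      have hkey : (n : ℝ) * (a i) ^ 2 ≤ ((n : ℝ) - 1) * s := by nlinarith
      -- and ((n-1)p)^2 = (n-1) s / n
      by_contra hcon
      push_neg at hcon
      have hnp : 0 ≤ ((n : ℝ) - 1) * p := by nlinarith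
      have : (((n : ℝ) - 1) * p) ^ 2 < (a i) ^ 2 := by nlinarith
      nlinarith [hp2]
    -- per-term tangent-line bound
    have hterm : ∀ i, (a i) ^ 3 ≤ ((n : ℝ) - 3) * p * (a i) ^ 2
        + (2 * (n : ℝ) - 3) * p ^ 2 * (a i) + ((n : ℝ) - 1) * p ^ 3 := by
      intro i
      have hident : (a i) ^ 3
          - (((n : ℝ) - 3) * p * (a i) ^ 2 + (2 * (n : ℝ) - 3) * p ^ 2 * (a i)
            + ((n : ℝ) - 1) * p ^ 3)
          = (a i + p) ^ 2 * (a i - ((n : ℝ) - 1) * p) := by ring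
      have hneg : (a i + p) ^ 2 * (a i - ((n : ℝ) - 1) * p) ≤ 0 :=
        mul_nonpos_of_nonneg_of_nonpos (sq_nonneg _) (by linarith [hmax i])
      linarith [hident ▸ hneg]
    have hsum : ∑ i, (a i) ^ 3
        ≤ ((n : ℝ) - 3) * p * s + (2 * (n : ℝ) - 3) * p ^ 2 * 0
          + (n : ℝ) * (((n : ℝ) - 1) * p ^ 3) := by
      calc ∑ i, (a i) ^ 3
          ≤ ∑ i, (((n : ℝ) - 3) * p * (a i) ^ 2 + (2 * (n : ℝ) - 3) * p ^ 2 * (a i)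
              + ((n : ℝ) - 1) * p ^ 3) := Finset.sum_le_sum fun i _ => hterm i
        _ = _ := by
            rw [Finset.sum_add_distrib, Finset.sum_add_distrib, ← Finset.mul_sum,
              ← Finset.mul_sum, Finset.sum_const, Finset.card_univ, Fintype.card_fin,
              nsmul_eq_mul, h0, hs_def]
    have hrpow : s ^ ((3 : ℝ) / 2) = s * β := by
      rw [show (3 : ℝ) / 2 = 1 + 1 / 2 by norm_num, Real.rpow_add hs, Real.rpow_one,
        ← Real.sqrt_eq_rpow, ← hβ_def]
    rw [hrpow]
    have hfin : ((n : ℝ) - 3) * p * s + (2 * (n : ℝ) - 3) * p ^ 2 * 0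
          + (n : ℝ) * (((n : ℝ) - 1) * p ^ 3)
        = (((n : ℝ) - 2) / q) * (s * β) := by
      have : (n : ℝ) * (((n : ℝ) - 1) * p ^ 3) = s * p := by nlinarith [hp2]
      rw [this, hp_def]
      field_simp
      ring
    exact le_trans hsum (le_of_eq hfin)

/-- Cubic trace bound for trace-free symmetric matrices:
tr(A³) ≤ ((n−2)/√(n(n−1)))·(tr A²)^{3/2}. -/
theorem stmt_11 (n : ℕ) (hn : 2 ≤ n)
    (A : Fin n → Fin n → ℝ)
    (hAsymm : ∀ i j, A i j = A j i)
    (hAtr : ∑ i, A i i = 0) :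
    ∑ i, ∑ j, ∑ k, A i j * A j k * A k i
    ≤ (((n : ℝ) - 2) / Real.sqrt ((n : ℝ) * ((n : ℝ) - 1)))
        * (∑ i, ∑ j, (A i j) ^ 2) ^ ((3 : ℝ) / 2) := by
  classical
  set B : Matrix (Fin n) (Fin n) ℝ := Matrix.of A with hB_def
  have hB : B.IsHermitian := by
    ext i j
    simp [Matrix.conjTranspose_apply, hB_def, hAsymm i j]
  set U : Matrix (Fin n) (Fin n) ℝ := (hB.eigenvectorUnitary : Matrix (Fin n) (Fin n) ℝ)
    with hU_def
  set lam : Fin n → ℝ := hB.eigenvalues with hlam_def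
  have hspec : B = U * Matrix.diagonal lam * star U := by
    have h := hB.spectral_theorem
    rw [show ((RCLike.ofReal : ℝ → ℝ) ∘ hB.eigenvalues) = hB.eigenvalues from
      funext fun i => by simp [RCLike.ofReal_real_eq_id]] at h
    exact h
  have hUs : star U * U = 1 := by
    have := (hB.eigenvectorUnitary).2
    exact (Matrix.mem_unitaryGroup_iff').mp this
  have hmid : ∀ X : Matrix (Fin n) (Fin n) ℝ, star U * (U * X) = X := by
    intro X
    rw [← Matrix.mul_assoc, hUs, Matrix.one_mul]
  have htraceU : ∀ X : Matrix (Fin n) (Fin n) ℝ, (U * X * star U).trace = X.trace := by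
    intro X
    rw [Matrix.trace_mul_cycle, hUs, Matrix.one_mul]
  -- trace identities
  have htr1 : B.trace = ∑ i, lam i := by
    rw [hspec, htraceU, Matrix.trace_diagonal]
  have htr2 : (B * B).trace = ∑ i, (lam i) ^ 2 := by
    have : B * B = U * (Matrix.diagonal lam * Matrix.diagonal lam) * star U := by
      rw [hspec]
      simp only [Matrix.mul_assoc, hmid]
    rw [this, htraceU, Matrix.diagonal_mul_diagonal, Matrix.trace_diagonal]
    exact Finset.sum_congr rfl fun i _ => (sq (lam i)).symm ▸ (by ring)
  have htr3 : (B * B * B).trace = ∑ i, (lam i) ^ 3 := by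
    have : B * B * B
        = U * (Matrix.diagonal lam * Matrix.diagonal lam * Matrix.diagonal lam) * star U := by
      rw [hspec]
      simp only [Matrix.mul_assoc, hmid]
    rw [this, htraceU, Matrix.diagonal_mul_diagonal, Matrix.diagonal_mul_diagonal,
      Matrix.trace_diagonal]
    exact Finset.sum_congr rfl fun i _ => by ring
  -- entrywise sums
  have hBapply : ∀ i j, B i j = A i j := fun i j => rfl
  have hlhs : ∑ i, ∑ j, ∑ k, A i j * A j k * A k i = (B * B * B).trace := by
    simp only [Matrix.trace, Matrix.diag_apply, Matrix.mul_apply, Finset.sum_mul,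
      Finset.mul_sum]
    rw [Finset.sum_comm]
    apply Finset.sum_congr rfl
    intro i _
    rw [Finset.sum_comm]
    apply Finset.sum_congr rfl
    intro j _
    apply Finset.sum_congr rfl
    intro k _
    show A k i * A i j * A j k = A i k * A k j * A j i
    rw [hAsymm k i, hAsymm i j, hAsymm j k]
    ring
  have hsq : ∑ i, ∑ j, (A i j) ^ 2 = (B * B).trace := by
    simp only [Matrix.trace, Matrix.diag_apply, Matrix.mul_apply]
    apply Finset.sum_congr rfl
    intro i _
    apply Finset.sum_congr rfl
    intro j _
    rw [hBapply, hBapply, hAsymm j i]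
    ring
  have hsum0 : ∑ i, lam i = 0 := by
    rw [← htr1]
    simpa [Matrix.trace, Matrix.diag_apply, hBapply] using hAtr
  rw [hlhs, hsq, htr3, htr2]
  exact okumura_lemma n hn lam hsum0
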